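/- Let a be a positive integer, b an integer coprime to a, b' an integer with b·b' ≡ 1 (mod a), and γ, δ integers. Then ∑_{r=1}^{a} ( {(γ − r·b)/a} + {(δ − r·b)/a} − {(γ + r·b)/a} − {(δ + r·b)/a} ) · ((r/a)) = −2·s(b, a; γ/a, 0) − 2·s(b, a; δ/a, 0) − ((b'·γ/a)) − ((b'·δ/a)). -/

import Mathlib

open scoped BigOperators

/-- The sawtooth function `((x))`: `x - ⌊x⌋ - 1/2` if `x` is not an integer, `0` otherwise. -/
noncomputable def sawtooth (x : ℝ) : ℝ :=
  if Int.fract x = 0 then 0 else Int.fract x - 1/2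

/-- The Dedekind–Rademacher sum `s(b, a; x, y)`. -/
noncomputable def drSum (b : ℤ) (a : ℕ) (x y : ℝ) : ℝ :=
  ∑ j ∈ Finset.range a, sawtooth (x + b * ((j : ℝ) + y) / a) * sawtooth (((j : ℝ) + y) / a)

lemma sawtooth_congr {x y : ℝ} (h : Int.fract x = Int.fract y) : sawtooth x = sawtooth y := by
  unfold sawtooth; rw [h]

lemma sawtooth_add_int (x : ℝ) (n : ℤ) : sawtooth (x + n) = sawtooth x :=
  sawtooth_congr (Int.fract_add_intCast x n)

lemma sawtooth_neg (x : ℝ) : sawtooth (-x) = -sawtooth x := by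
  unfold sawtooth
  rcases eq_or_ne (Int.fract x) 0 with h | h
  · rw [if_pos h, if_pos (Int.fract_neg_eq_zero.mpr h), neg_zero]
  · rw [if_neg h, if_neg (fun h' => h (Int.fract_neg_eq_zero.mp h')), Int.fract_neg h]
    ring

lemma fract_int_div_eq_zero_iff {m : ℤ} {a : ℕ} (ha : 0 < a) :
    Int.fract ((m : ℝ) / a) = 0 ↔ (a : ℤ) ∣ m := by
  rw [Int.fract_div_intCast_eq_div_intCast_mod, div_eq_zero_iff]
  constructor
  · rintro (h | h)
    · exact Int.dvd_of_emod_eq_zero (by exact_mod_cast h)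
    · exact absurd h (by positivity)
  · intro h
    left
    have : m % (a:ℤ) = 0 := Int.emod_eq_zero_of_dvd h
    rw [this]; norm_num

lemma sum_sawtooth_zero (a : ℕ) (ha : 0 < a) :
    ∑ r ∈ Finset.range a, sawtooth ((r : ℝ) / a) = 0 := by
  have ha' : (0:ℝ) < a := by exact_mod_cast ha
  have key : ∀ r ∈ Finset.range a, sawtooth ((r : ℝ) / a)
      = (if r = 0 then (1:ℝ)/2 else 0) + ((r : ℝ) / a - 1/2) := by
    intro r hr
    have hrlt : r < a := Finset.mem_range.mp hr
    have hfr : Int.fract ((r:ℝ)/a) = (r:ℝ)/a := by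
      apply Int.fract_eq_self.mpr
      constructor
      · positivity
      · rw [div_lt_one ha']; exact_mod_cast hrlt
    unfold sawtooth
    rw [hfr]
    rcases eq_or_ne r 0 with rfl | hr0
    · simp
    · have : (r:ℝ)/a ≠ 0 := by
        have : (0:ℝ) < (r:ℝ)/a := by
          have : (0:ℝ) < r := by exact_mod_cast Nat.pos_of_ne_zero hr0
          positivity
        linarith
      rw [if_neg this, if_neg hr0]; ring
  rw [Finset.sum_congr rfl key, Finset.sum_add_distrib, Finset.sum_ite_eq' (Finset.range a) 0]
  rw [if_pos (Finset.mem_range.mpr ha), Finset.sum_sub_distrib]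
  rw [← Finset.sum_div]
  have h1 : ∑ r ∈ Finset.range a, (r:ℝ) = a * (a - 1) / 2 := by
    have h2 := congrArg (Nat.cast : ℕ → ℝ) (Finset.sum_range_id_mul_two a)
    push_cast [Nat.cast_sub ha] at h2
    linarith
  rw [h1, Finset.sum_const, Finset.card_range]
  field_simp
  ring

lemma indicator_sum (a : ℕ) (ha : 0 < a) (b b' c : ℤ)
    (hbb' : b * b' ≡ 1 [ZMOD (a : ℤ)]) :
    ∑ r ∈ Finset.range a,
        (if Int.fract (((c : ℝ) + (r : ℝ) * b) / a) = 0 then sawtooth ((r : ℝ) / a) else 0)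
      = -sawtooth ((b' : ℝ) * c / a) := by
  have haZ : (0:ℤ) < (a:ℤ) := by exact_mod_cast ha
  -- the distinguished residue
  set r0 : ℕ := ((-(b' * c)) % a).toNat with hr0def
  have hr0Z : (r0 : ℤ) = (-(b' * c)) % a := by
    rw [hr0def]; exact Int.toNat_of_nonneg (Int.emod_nonneg _ haZ.ne')
  have hr0lt : r0 < a := by
    have := Int.emod_lt_of_pos (-(b' * c)) haZ
    omega
  have hr0mod : (r0 : ℤ) ≡ -(b' * c) [ZMOD (a:ℤ)] := by
    rw [hr0Z]; exact (Int.emod_emod_of_dvd _ dvd_rfl)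
  -- condition characterization
  have hchar : ∀ r : ℕ, ((a:ℤ) ∣ c + (r:ℤ) * b) ↔ ((r:ℤ) ≡ -(b' * c) [ZMOD (a:ℤ)]) := by
    intro r
    constructor
    · intro h
      have h0 : (c + (r:ℤ) * b) ≡ 0 [ZMOD (a:ℤ)] := Int.modEq_zero_iff_dvd.mpr h
      have h1 : (c + (r:ℤ) * b) * b' ≡ 0 * b' [ZMOD (a:ℤ)] := h0.mul_right b'
      have h2 : (r:ℤ) * (b * b') ≡ (r:ℤ) * 1 [ZMOD (a:ℤ)] := hbb'.mul_left _
      calc (r:ℤ) = (c + r*b) * b' - c*b' - r*(b*b') + r*1 := by ring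
        _ ≡ 0 * b' - c*b' - r*1 + r*(b*b') [ZMOD (a:ℤ)] := by
            exact (((h1.sub_right _).sub h2).add h2.symm)
        _ = -(b'*c) + r*(b*b' - 1) := by ring
        _ ≡ -(b'*c) + r*0 [ZMOD (a:ℤ)] := by
            exact Int.ModEq.add_left _ ((hbb'.sub_right 1).mul_left r |>.trans (by simp))
        _ = -(b'*c) := by ring
    · intro h
      have h2 : (r:ℤ) * b ≡ -(b'*c) * b [ZMOD (a:ℤ)] := h.mul_right b
      have h3 : c + (r:ℤ)*b ≡ c + -(b'*c)*b [ZMOD (a:ℤ)] := h2.add_left c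
      have h4 : c + -(b'*c)*b = c * (1 - b*b') := by ring
      have h5 : c * (1 - b*b') ≡ 0 [ZMOD (a:ℤ)] := by
        simpa using Int.ModEq.mul_left c (Int.ModEq.sub_left 1 hbb')
      exact Int.modEq_zero_iff_dvd.mp (h3.trans (h4 ▸ h5))
  rw [Finset.sum_eq_single_of_mem r0 (Finset.mem_range.mpr hr0lt)]
  · -- value at r0
    have hcond : Int.fract (((c : ℝ) + (r0 : ℝ) * b) / a) = 0 := by
      have : ((c : ℝ) + (r0 : ℝ) * b) = ((c + (r0:ℤ)*b : ℤ) : ℝ) := by push_cast; ring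
      rw [this, fract_int_div_eq_zero_iff ha]
      exact (hchar r0).mpr hr0mod
    rw [if_pos hcond]
    -- sawtooth (r0/a) = - sawtooth (b'*c/a)
    have hk : (r0 : ℤ) = -(b'*c) - a * ((-(b'*c))/a) := by rw [hr0Z, Int.emod_def]
    have : (r0 : ℝ) / a = -((b':ℝ) * c / a) + (-((-(b'*c))/a) : ℤ) := by
      have ha' : (a:ℝ) ≠ 0 := by positivity
      have := congrArg (fun z : ℤ => (z : ℝ)) hk
      push_cast at this
      rw [this]; field_simp; push_cast; ring
    rw [this, sawtooth_add_int, sawtooth_neg]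
  · -- other terms vanish
    intro r hr hne
    have hrlt : r < a := Finset.mem_range.mp hr
    rw [if_neg]
    intro hcond
    have : ((c : ℝ) + (r : ℝ) * b) = ((c + (r:ℤ)*b : ℤ) : ℝ) := by push_cast; ring
    rw [this, fract_int_div_eq_zero_iff ha] at hcond
    have hmod : (r:ℤ) ≡ (r0:ℤ) [ZMOD (a:ℤ)] := ((hchar r).mp hcond).trans hr0mod.symm
    have : (r:ℤ) % a = (r0:ℤ) % a := hmod
    rw [Int.emod_eq_of_lt (by positivity) (by exact_mod_cast hrlt),
        Int.emod_eq_of_lt (by positivity) (by exact_mod_cast hr0lt)] at this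
    exact hne (by exact_mod_cast this)

lemma sawtooth_natCast_div_self (a : ℕ) (ha : 0 < a) : sawtooth ((a:ℝ)/a) = 0 := by
  have : (a:ℝ)/a = 1 := div_self (by positivity)
  rw [this]
  unfold sawtooth
  rw [if_pos (by norm_num [Int.fract])]

lemma sawtooth_zero : sawtooth 0 = 0 := by
  unfold sawtooth; rw [if_pos (by norm_num [Int.fract])]

lemma sum_Icc_eq_range (a : ℕ) (ha : 0 < a) (f : ℕ → ℝ) (h0 : f 0 = 0) (hA : f a = 0) :
    ∑ r ∈ Finset.Icc 1 a, f r = ∑ r ∈ Finset.range a, f r := by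
  have h1 : Finset.Icc 1 a ⊆ Finset.range (a+1) := by
    intro x hx
    simp only [Finset.mem_Icc] at hx
    exact Finset.mem_range.mpr (by omega)
  rw [Finset.sum_subset h1 (by
    intro x hx hnx
    simp only [Finset.mem_range] at hx
    simp only [Finset.mem_Icc] at hnx
    have : x = 0 := by omega
    rw [this]; exact h0), Finset.sum_range_succ, hA, add_zero]

lemma reflect_sum (a : ℕ) (ha : 0 < a) (b c : ℤ) :
    ∑ r ∈ Finset.Icc 1 a, Int.fract (((c:ℝ) - (r:ℝ) * b) / a) * sawtooth ((r:ℝ)/a)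
      = -∑ r ∈ Finset.range a, Int.fract (((c:ℝ) + (r:ℝ) * b) / a) * sawtooth ((r:ℝ)/a) := by
  rw [← Finset.sum_neg_distrib]
  refine Finset.sum_nbij' (fun r => a - r) (fun r => a - r) ?_ ?_ ?_ ?_ ?_
  · intro r hr
    simp only [Finset.mem_Icc] at hr
    exact Finset.mem_range.mpr (by omega)
  · intro r hr
    simp only [Finset.mem_range] at hr
    simp only [Finset.mem_Icc]
    show 1 ≤ a - r ∧ a - r ≤ a
    omega
  · intro r hr; simp only [Finset.mem_Icc] at hr; omega
  · intro r hr; simp only [Finset.mem_range] at hr; omega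
  · intro r hr
    simp only [Finset.mem_Icc] at hr
    have ha' : (a:ℝ) ≠ 0 := by positivity
    have hcast : ((a - r : ℕ) : ℝ) = (a:ℝ) - r := by
      rw [Nat.cast_sub hr.2]
    rw [hcast]
    have h1 : ((c:ℝ) + ((a:ℝ) - r) * b) / a = ((c:ℝ) - (r:ℝ)*b)/a + (b:ℤ) := by
      field_simp; ring
    have h2 : ((a:ℝ) - r)/a = -((r:ℝ)/a) + ((1:ℤ):ℝ) := by
      field_simp; ring
    rw [h1, h2, Int.fract_add_intCast, sawtooth_add_int, sawtooth_neg]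
    ring

lemma S1_eq (a : ℕ) (ha : 0 < a) (b b' c : ℤ)
    (hbb' : b * b' ≡ 1 [ZMOD (a : ℤ)]) :
    ∑ r ∈ Finset.range a, Int.fract (((c:ℝ) + (r:ℝ) * b) / a) * sawtooth ((r:ℝ)/a)
      = drSum b a ((c:ℝ)/a) 0 + (1/2) * sawtooth ((b':ℝ) * c / a) := by
  have ha' : (a:ℝ) ≠ 0 := by positivity
  have key : ∀ r ∈ Finset.range a,
      Int.fract (((c:ℝ) + (r:ℝ)*b)/a) * sawtooth ((r:ℝ)/a)
      = sawtooth ((c:ℝ)/a + (b:ℝ) * ((r:ℝ) + 0)/a) * sawtooth (((r:ℝ)+0)/a)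
        + (1/2) * sawtooth ((r:ℝ)/a)
        - (1/2) * (if Int.fract (((c:ℝ) + (r:ℝ)*b)/a) = 0 then sawtooth ((r:ℝ)/a) else 0) := by
    intro r hr
    have harg : (c:ℝ)/a + (b:ℝ) * ((r:ℝ) + 0)/a = ((c:ℝ) + (r:ℝ)*b)/a := by
      field_simp; ring
    rw [harg, add_zero]
    unfold sawtooth
    rcases eq_or_ne (Int.fract (((c:ℝ) + (r:ℝ)*b)/a)) 0 with h | h
    · rw [h, if_pos rfl, if_pos rfl]; ring
    · rw [if_neg h, if_neg h]; ring
  rw [Finset.sum_congr rfl key, Finset.sum_sub_distrib, Finset.sum_add_distrib,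
      ← Finset.mul_sum, ← Finset.mul_sum, sum_sawtooth_zero a ha,
      indicator_sum a ha b b' c hbb']
  rw [drSum]
  ring

theorem fract_sawtooth_sum_eq (a : ℕ) (ha : 0 < a) (b b' γ δ : ℤ)
    (hb : Int.gcd b a = 1) (hbb' : b * b' ≡ 1 [ZMOD (a : ℤ)]) :
    ∑ r ∈ Finset.Icc 1 a,
        (Int.fract (((γ : ℝ) - (r : ℝ) * b) / a) + Int.fract (((δ : ℝ) - (r : ℝ) * b) / a)
          - Int.fract (((γ : ℝ) + (r : ℝ) * b) / a) - Int.fract (((δ : ℝ) + (r : ℝ) * b) / a))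
          * sawtooth ((r : ℝ) / a)
      = -2 * drSum b a ((γ : ℝ) / a) 0 - 2 * drSum b a ((δ : ℝ) / a) 0
        - sawtooth ((b' : ℝ) * (γ : ℝ) / a) - sawtooth ((b' : ℝ) * (δ : ℝ) / a) := by
  have hsplit : ∀ r ∈ Finset.Icc 1 a,
      (Int.fract (((γ : ℝ) - (r : ℝ) * b) / a) + Int.fract (((δ : ℝ) - (r : ℝ) * b) / a)
          - Int.fract (((γ : ℝ) + (r : ℝ) * b) / a) - Int.fract (((δ : ℝ) + (r : ℝ) * b) / a))
          * sawtooth ((r : ℝ) / a)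
      = (Int.fract (((γ : ℝ) - (r : ℝ) * b) / a) * sawtooth ((r : ℝ) / a)
          + Int.fract (((δ : ℝ) - (r : ℝ) * b) / a) * sawtooth ((r : ℝ) / a))
        - (Int.fract (((γ : ℝ) + (r : ℝ) * b) / a) * sawtooth ((r : ℝ) / a)
          + Int.fract (((δ : ℝ) + (r : ℝ) * b) / a) * sawtooth ((r : ℝ) / a)) :=
    fun r _ => by ring
  rw [Finset.sum_congr rfl hsplit, Finset.sum_sub_distrib, Finset.sum_add_distrib,
      Finset.sum_add_distrib]
  rw [reflect_sum a ha b γ, reflect_sum a ha b δ]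
  have h0 : ∀ c : ℤ, Int.fract (((c:ℝ) + ((0:ℕ):ℝ) * b) / a) * sawtooth (((0:ℕ):ℝ) / a) = 0 := by
    intro c
    simp [sawtooth_zero]
  have hA : ∀ c : ℤ, Int.fract (((c:ℝ) + ((a:ℕ):ℝ) * b) / a) * sawtooth (((a:ℕ):ℝ) / a) = 0 := by
    intro c
    rw [sawtooth_natCast_div_self a ha, mul_zero]
  rw [sum_Icc_eq_range a ha (fun r => Int.fract (((γ:ℝ) + (r:ℝ) * b) / a) * sawtooth ((r:ℝ)/a))
        (h0 γ) (hA γ),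
      sum_Icc_eq_range a ha (fun r => Int.fract (((δ:ℝ) + (r:ℝ) * b) / a) * sawtooth ((r:ℝ)/a))
        (h0 δ) (hA δ)]
  rw [S1_eq a ha b b' γ hbb', S1_eq a ha b b' δ hbb']
  ring
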